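/- Let G be a graph and F ⊆ E(G) a set of edges such that G/F is a cactus, with G/F-witness structure W of G. Then there exists a coloring f: V(G) → {1,2,3} that is compatible with W. -/

import Mathlib

open SimpleGraph

universe u v

/-- A cactus: a connected graph in which every edge lies on at most one cycle
(any two cycles through a common edge have the same edge set). -/
def IsCactus {V : Type u} (G : SimpleGraph V) : Prop :=
  G.Connected ∧ ∀ (e : Sym2 V) (a b : V) (c₁ : G.Walk a a) (c₂ : G.Walk b b),
    c₁.IsCycle → c₂.IsCycle → e ∈ c₁.edges → e ∈ c₂.edges →
    {e' | e' ∈ c₁.edges} = {e' | e' ∈ c₂.edges}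

/-- The graph `G/F` obtained by contracting the edges of `F`: its vertices are the
connected components of the subgraph spanned by the edges of `F` that lie in `G`. -/
def contract {V : Type u} (G : SimpleGraph V) (F : Set (Sym2 V)) :
    SimpleGraph (SimpleGraph.fromEdgeSet F ⊓ G).ConnectedComponent where
  Adj a b := a ≠ b ∧ ∃ x y : V, G.Adj x y ∧
      (SimpleGraph.fromEdgeSet F ⊓ G).connectedComponentMk x = a ∧
      (SimpleGraph.fromEdgeSet F ⊓ G).connectedComponentMk y = b
  symm := ⟨by
    rintro a b ⟨hne, x, y, hadj, hx, hy⟩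
    exact ⟨hne.symm, y, x, hadj.symm, hy, hx⟩⟩
  loopless := ⟨by
    rintro a ⟨hne, -⟩
    exact hne rfl⟩

/-- A cut-vertex of `G`: removing it disconnects the graph. -/
def IsCutVertex {V : Type u} (G : SimpleGraph V) (x : V) : Prop :=
  ¬ (G.induce ({x}ᶜ : Set V)).Connected

/-- 2-connected: connected, at least 3 vertices, no cut-vertex. -/
def TwoConnected {V : Type u} (G : SimpleGraph V) : Prop :=
  G.Connected ∧ 3 ≤ Nat.card V ∧ ∀ x : V, (G.induce ({x}ᶜ : Set V)).Connected

/-- A cable path: a path whose internal vertices are adjacent exactly to their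
two neighbours on the path. -/
def IsCablePath {V : Type u} (G : SimpleGraph V) (l : List V) : Prop :=
  l ≠ [] ∧ l.Nodup ∧ l.Chain' G.Adj ∧
  ∀ (i : ℕ) (h2 : i + 1 < l.length) (_h1 : 1 ≤ i) (y : V),
    G.Adj (l.get ⟨i, by omega⟩) y ↔
      (y = l.get ⟨i - 1, by omega⟩ ∨ y = l.get ⟨i + 1, h2⟩)

/-- `G` is contractible to `H` via `ψ`: preimages are connected witness sets and
`H`-adjacency corresponds to existence of crossing edges of `G`. -/
def IsContraction {V : Type u} {W : Type v} (G : SimpleGraph V) (H : SimpleGraph W)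
    (ψ : V → W) : Prop :=
  Function.Surjective ψ ∧
  (∀ t : W, (G.induce (ψ ⁻¹' {t})).Connected) ∧
  (∀ t t' : W, H.Adj t t' ↔ t ≠ t' ∧ ∃ x y : V, G.Adj x y ∧ ψ x = t ∧ ψ y = t')

/-- The witness set of `t` is big: it contains at least two vertices. -/
def BigWitness {V : Type u} {W : Type v} (ψ : V → W) (t : W) : Prop :=
  ∃ a b : V, a ≠ b ∧ ψ a = t ∧ ψ b = t

/-- A 3-colouring `f` of `V(G)` is compatible with the `T`-witness structure given by `ψ`:
witness sets are monochromatic, adjacent big witness sets get distinct colours, and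
endpoints of cable paths in `T` between two big witness sets through singleton witness
sets are coloured differently from their path-neighbours. -/
def Compatible {V : Type u} {W : Type v} (T : SimpleGraph W) (ψ : V → W)
    (f : V → Fin 3) : Prop :=
  (∀ x y : V, ψ x = ψ y → f x = f y) ∧
  (∀ t t' : W, BigWitness ψ t → BigWitness ψ t' → T.Adj t t' →
    ∀ x y : V, ψ x = t → ψ y = t' → f x ≠ f y) ∧
  (∀ l : List W, IsCablePath T l → ∀ (hlen : 3 ≤ l.length),
    BigWitness ψ (l.get ⟨0, by omega⟩) →
    BigWitness ψ (l.get ⟨l.length - 1, by omega⟩) →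
    (∀ (i : ℕ) (h : i < l.length), 1 ≤ i → i < l.length - 1 →
      ¬ BigWitness ψ (l.get ⟨i, h⟩)) →
    ((∀ x y : V, ψ x = l.get ⟨0, by omega⟩ → ψ y = l.get ⟨1, by omega⟩ → f x ≠ f y) ∧
     (∀ x y : V, ψ x = l.get ⟨l.length - 1, by omega⟩ →
        ψ y = l.get ⟨l.length - 2, by omega⟩ → f x ≠ f y)))

/-- The graph `G - Z`, seen as a graph on all of `V`: edges of `G` avoiding `Z`. -/
def restrictOutside {V : Type u} (G : SimpleGraph V) (Z : Set V) : SimpleGraph V where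
  Adj x y := G.Adj x y ∧ x ∉ Z ∧ y ∉ Z
  symm := ⟨by rintro x y ⟨h, hx, hy⟩; exact ⟨h.symm, hy, hx⟩⟩
  loopless := ⟨by rintro x ⟨h, -, -⟩; exact G.ne_of_adj h rfl⟩

/-- `Z` is a core of `G`: every connected component of `G - Z` is an isolated vertex
or (the vertex set of) a cable path of `G`. -/
def IsCore {V : Type u} (G : SimpleGraph V) (Z : Set V) : Prop :=
  ∀ x ∉ Z, {u | (restrictOutside G Z).Reachable x u} = {x} ∨
    ∃ l : List V, IsCablePath G l ∧
      {u | (restrictOutside G Z).Reachable x u} = {u | u ∈ l}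

/-- A connected core. -/
def IsConnectedCore {V : Type u} (G : SimpleGraph V) (Z : Set V) : Prop :=
  (G.induce Z).Connected ∧ IsCore G Z

/-- `B` induces a nonempty connected subgraph without cut-vertices. -/
def NoCutVertexSet {V : Type u} (G : SimpleGraph V) (B : Set V) : Prop :=
  B.Nonempty ∧ (G.induce B).Connected ∧
  ∀ x ∈ B, (B \ {x}).Nonempty → (G.induce (B \ {x})).Connected

/-- A block of `G`: a maximal set inducing a connected subgraph without cut-vertices. -/
def IsBlock {V : Type u} (G : SimpleGraph V) (B : Set V) : Prop :=
  NoCutVertexSet G B ∧ ∀ B' : Set V, B ⊆ B' → NoCutVertexSet G B' → B = B'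

/-- `B` is the vertex set of an induced cycle of `G`. -/
def IsCycleSet {V : Type u} (G : SimpleGraph V) (B : Set V) : Prop :=
  ∃ (a : V) (c : G.Walk a a), c.IsCycle ∧ {x | x ∈ c.support} = B ∧
    ∀ x ∈ B, ∀ y ∈ B, G.Adj x y → s(x, y) ∈ c.edges

/-- `G` can be turned into a cactus by contracting at most `k` edges. -/
def KContractibleToCactus {V : Type u} (G : SimpleGraph V) (k : ℕ) : Prop :=
  ∃ F : Set (Sym2 V), F ⊆ G.edgeSet ∧ F.ncard ≤ k ∧ IsCactus (contract G F)

/-- `G` has a tree decomposition of width at most `w`. -/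
def HasTreewidthAtMost {V : Type u} (G : SimpleGraph V) (w : ℕ) : Prop :=
  ∃ (ι : Type u) (T : SimpleGraph ι) (β : ι → Set V),
    T.Connected ∧ T.IsAcyclic ∧
    (∀ x : V, ∃ i, x ∈ β i) ∧
    (∀ ⦃x y : V⦄, G.Adj x y → ∃ i, x ∈ β i ∧ y ∈ β i) ∧
    (∀ (x : V) (i j : ι), x ∈ β i → x ∈ β j →
      ∀ p : T.Walk i j, p.IsPath → ∀ z ∈ p.support, x ∈ β z) ∧
    (∀ i, (β i).ncard ≤ w + 1)


section AuxCactusColoring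

universe u'
variable {α : Type u'}

def NoTheta (G : SimpleGraph α) : Prop :=
  ∀ (e : Sym2 α) (a b : α) (c₁ : G.Walk a a) (c₂ : G.Walk b b),
    c₁.IsCycle → c₂.IsCycle → e ∈ c₁.edges → e ∈ c₂.edges →
    {e' | e' ∈ c₁.edges} = {e' | e' ∈ c₂.edges}


lemma NoTheta.pull {G : SimpleGraph α} {H : SimpleGraph β} (φ : H →g G)
    (hφ : Function.Injective φ) (hG : NoTheta G) : NoTheta H := by
  intro e a b c₁ c₂ h₁ h₂ he₁ he₂
  have key := hG (Sym2.map φ e) (φ a) (φ b) (c₁.map φ) (c₂.map φ)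
    (h₁.map hφ) (h₂.map hφ)
    (by rw [Walk.edges_map]; exact List.mem_map_of_mem he₁)
    (by rw [Walk.edges_map]; exact List.mem_map_of_mem he₂)
  have step : ∀ {x y : β} (d₁ : H.Walk x x) (d₂ : H.Walk y y),
      ({e' | e' ∈ (d₁.map φ).edges} = {e' | e' ∈ (d₂.map φ).edges}) →
      ∀ e' ∈ d₁.edges, e' ∈ d₂.edges := by
    intro x y d₁ d₂ hset e' he'
    have h1 : Sym2.map φ e' ∈ (d₁.map φ).edges := by
      rw [Walk.edges_map]; exact List.mem_map_of_mem he'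
    have h2 : Sym2.map φ e' ∈ (d₂.map φ).edges := (Set.ext_iff.mp hset _).mp h1
    rw [Walk.edges_map, List.mem_map] at h2
    obtain ⟨e'', he'', heq⟩ := h2
    rwa [← Sym2.map.injective hφ heq]
  ext e'
  exact ⟨fun h => step c₁ c₂ key e' h, fun h => step c₂ c₁ key.symm e' h⟩


lemma firstEdge_mem_takeUntil [DecidableEq α] {H : SimpleGraph α} {v x w u : α}
    (r : H.Adj v x) (p' : H.Walk x w) (h : u ∈ (Walk.cons r p').support) (hu : u ≠ v) :
    s(v, x) ∈ ((Walk.cons r p').takeUntil u h).edges := by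
  rw [Walk.takeUntil]
  rw [dif_neg (fun hvu => hu hvu.symm)]
  simp

lemma exists_degree_le_two [Fintype α] [DecidableEq α] (H : SimpleGraph α)
    [DecidableRel H.Adj] [Nonempty α] (hnt : NoTheta H) :
    ∃ v : α, H.degree v ≤ 2 := by
  classical
  by_contra hdeg
  push_neg at hdeg
  -- a maximal path
  obtain ⟨v, w, p, hp, hmax⟩ :
      ∃ (v w : α) (p : H.Walk v w), p.IsPath ∧
        ∀ (a b : α) (q : H.Walk a b), q.IsPath → q.length ≤ p.length := by
    let P : ℕ → Prop := fun n => ∃ (a b : α) (q : H.Walk a b), q.IsPath ∧ q.length = n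
    haveI : DecidablePred P := fun _ => Classical.propDecidable _
    have h0 : P 0 :=
      ⟨Classical.arbitrary α, Classical.arbitrary α, Walk.nil, Walk.IsPath.nil, rfl⟩
    obtain ⟨a, b, q, hq, hlen⟩ :=
      Nat.findGreatest_spec (P := P) (Nat.zero_le (Fintype.card α)) h0
    refine ⟨a, b, q, hq, fun a' b' q' hq' => ?_⟩
    rw [hlen]
    exact Nat.le_findGreatest (le_of_lt hq'.length_lt) ⟨a', b', q', hq', rfl⟩
  have hsup : ∀ u, H.Adj v u → u ∈ p.support := by
    intro u hu
    by_contra hns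
    have hpath : (Walk.cons hu.symm p).IsPath := (Walk.cons_isPath_iff _ _).2 ⟨hp, hns⟩
    have := hmax _ _ _ hpath
    simp [Walk.length_cons] at this
  cases p with
  | nil =>
      have h3 := hdeg v
      have hpos : 0 < H.degree v := by omega
      obtain ⟨u, hu⟩ := (H.degree_pos_iff_exists_adj v).mp hpos
      have := hsup u hu
      simp only [Walk.support_nil, List.mem_singleton] at this
      subst this
      exact H.loopless.irrefl _ hu
  | cons r p' =>
      rename_i x
      -- r : H.Adj v x, p' : H.Walk x w
      set p := Walk.cons r p' with hpdef
      have hA : 1 < (H.neighborFinset v \ {x}).card := by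
        have h1 : (H.neighborFinset v).card ≤ (H.neighborFinset v \ {x}).card + ({x} : Finset α).card :=
          Finset.card_le_card_sdiff_add_card
      -- degree = card
        have h2 : 2 < (H.neighborFinset v).card := hdeg v
        simp only [Finset.card_singleton] at h1
        omega
      obtain ⟨u₁, hu₁, u₂, hu₂, hne⟩ := Finset.one_lt_card.mp hA
      simp only [Finset.mem_sdiff, Finset.mem_singleton, SimpleGraph.mem_neighborFinset] at hu₁ hu₂
      have hnoback : ∀ y : α, y ≠ x → y ≠ v → s(y, v) ∉ p.edges := by
        intro y hyx hyv hmem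
        rw [hpdef, Walk.edges_cons, List.mem_cons] at hmem
        rcases hmem with hmem | hmem
        · rw [Sym2.eq_iff] at hmem
          rcases hmem with ⟨h1, h2⟩ | ⟨h1, h2⟩
          · exact hyv h1
          · exact hyx h1
        · have hv' : v ∈ p'.support := Walk.snd_mem_support_of_mem_edges p' hmem
          have := (Walk.cons_isPath_iff r p').mp hp
          exact this.2 hv'
      -- build the two cycles
      have build : ∀ y : α, H.Adj v y → y ≠ x → y ≠ v →
          ∃ (hys : y ∈ p.support) (c : H.Walk y y), c.IsCycle ∧ s(v, x) ∈ c.edges ∧ c.edges = s(y, v) :: (p.takeUntil y hys).edges := by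
        intro y hy hyx hyv
        refine ⟨hsup y hy, ?_⟩
        have hys : y ∈ p.support := hsup y hy
        set t := p.takeUntil y hys with htdef
        have ht : t.IsPath := hp.takeUntil hys
        have hey : s(y, v) ∉ t.edges := fun hm =>
          hnoback y hyx hyv (Walk.edges_takeUntil_subset p hys hm)
        refine ⟨Walk.cons hy.symm t, ?_, ?_, rfl⟩
        · exact SimpleGraph.Path.cons_isCycle ⟨t, ht⟩ hy.symm hey
        · rw [Walk.edges_cons]
          exact List.mem_cons_of_mem _ (firstEdge_mem_takeUntil r p' hys hyv)
      obtain ⟨hys₁, c₁, hc₁, he₁, hedges₁⟩ := build u₁ hu₁.1 hu₁.2 (fun h => H.loopless.irrefl v (h ▸ hu₁.1))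
      obtain ⟨hys₂, c₂, hc₂, he₂, hedges₂⟩ := build u₂ hu₂.1 hu₂.2 (fun h => H.loopless.irrefl v (h ▸ hu₂.1))
      have key := hnt s(v, x) u₁ u₂ c₁ c₂ hc₁ hc₂ he₁ he₂
      have hm1 : s(u₁, v) ∈ c₁.edges := by rw [hedges₁]; exact List.mem_cons_self
      have hm2 : s(u₁, v) ∈ c₂.edges := (Set.ext_iff.mp key _).mp hm1
      rw [hedges₂, List.mem_cons] at hm2
      rcases hm2 with hm2 | hm2
      · rw [Sym2.eq_iff] at hm2
        rcases hm2 with ⟨h1, h2⟩ | ⟨h1, h2⟩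
        · exact hne (h1.trans rfl)
        · exact H.loopless.irrefl v (h1 ▸ hu₁.1)
      · exact hnoback u₁ hu₁.2 (fun h => H.loopless.irrefl v (h ▸ hu₁.1))
          (Walk.edges_takeUntil_subset _ _ hm2)


lemma noTheta_colorable_fin : ∀ (n : ℕ) {α : Type u'} (H : SimpleGraph α) (inst : Fintype α),
    @Fintype.card α inst = n → NoTheta H →
    ∃ f : α → Fin 3, ∀ a b, H.Adj a b → f a ≠ f b := by
  intro n
  induction n using Nat.strong_induction_on with
  | _ n ih =>
  intro α H inst hcard hnt
  classical
  rcases Nat.eq_zero_or_pos n with h0 | hpos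
  · subst h0
    have he : IsEmpty α := Fintype.card_eq_zero_iff.mp hcard
    exact ⟨fun a => (he.false a).elim, fun a => (he.false a).elim⟩
  · have hne : Nonempty α := Fintype.card_pos_iff.mp (hcard ▸ hpos)
    obtain ⟨v, hv⟩ := exists_degree_le_two H hnt
    let emb : {x : α // x ≠ v} ↪ α := Function.Embedding.subtype _
    let H' := H.comap emb
    have hnt' : NoTheta H' := hnt.pull (Embedding.comap emb H).toHom emb.injective
    have hcard' : Fintype.card {x : α // x ≠ v} = n - 1 := by
      have h1 : Fintype.card {x : α // ¬ x = v} = Fintype.card α - Fintype.card {x : α // x = v} :=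
        Fintype.card_subtype_compl _
      rw [Fintype.card_subtype_eq, hcard] at h1
      exact h1
    obtain ⟨g, hg⟩ := ih (n - 1) (by omega) H' _ hcard' hnt'
    let Fc : α → Fin 3 := fun x => if h : x = v then 0 else g ⟨x, h⟩
    let A : Finset (Fin 3) := (H.neighborFinset v).image Fc
    have hAcard : A.card < 3 := by
      calc A.card ≤ (H.neighborFinset v).card := Finset.card_image_le
        _ ≤ 2 := hv
        _ < 3 := by omega
    obtain ⟨c, hc⟩ : ∃ c : Fin 3, c ∉ A := by
      by_contra hall
      push_neg at hall
      have : (Finset.univ : Finset (Fin 3)).card ≤ A.card :=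
        Finset.card_le_card (fun c _ => hall c)
      simp at this
      omega
    refine ⟨fun x => if h : x = v then c else g ⟨x, h⟩, ?_⟩
    intro a b hab
    by_cases ha : a = v
    · subst ha
      have hb : b ≠ a := fun h => H.loopless.irrefl a (h ▸ hab)
      simp only [dif_pos rfl, dif_neg hb]
      intro heq
      apply hc
      have hc' : c = g ⟨b, hb⟩ := by simpa using heq
      rw [hc']
      refine Finset.mem_image.mpr ⟨b, ?_, ?_⟩
      · exact (H.mem_neighborFinset a b).mpr hab
      · simp only [Fc, dif_neg hb]
    · by_cases hb : b = v
      · subst hb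
        simp only [dif_neg ha, dif_pos rfl]
        intro heq
        apply hc
        have hc' : g ⟨a, ha⟩ = c := by simpa using heq
        rw [← hc']
        refine Finset.mem_image.mpr ⟨a, ?_, ?_⟩
        · exact (H.mem_neighborFinset b a).mpr hab.symm
        · simp only [Fc, dif_neg ha]
      · simp only [dif_neg ha, dif_neg hb]
        exact hg ⟨a, ha⟩ ⟨b, hb⟩ hab

lemma noTheta_colorable {α : Type u'} (H : SimpleGraph α) (hc : NoTheta H) :
    ∃ f : α → Fin 3, ∀ a b, H.Adj a b → f a ≠ f b := by
  have hhom : Nonempty (H →g (⊤ : SimpleGraph (Fin 3))) := by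
    apply nonempty_hom_of_forall_finite_subgraph_hom
    intro G' hfin
    haveI : Fintype G'.verts := hfin.fintype
    have hnt' : NoTheta G'.coe := hc.pull G'.hom Subgraph.hom_injective
    have : Nonempty (G'.coe →g (⊤ : SimpleGraph (Fin 3))) := by
      obtain ⟨f, hf⟩ := noTheta_colorable_fin (Fintype.card G'.verts) G'.coe _ rfl hnt'
      exact ⟨⟨f, fun hadj => by simp only [top_adj]; exact hf _ _ hadj⟩⟩
    exact Classical.choice this
  obtain ⟨φ⟩ := hhom
  refine ⟨φ, fun a b h => ?_⟩
  have := φ.map_adj h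
  simpa using this

end AuxCactusColoring

/-- If `G/F` is a cactus then there is a 3-colouring of `V(G)` compatible with the
`G/F`-witness structure of `G`. -/
theorem stmt7 {V : Type u} (G : SimpleGraph V) (F : Set (Sym2 V))
    (hF : F ⊆ G.edgeSet) (hT : IsCactus (contract G F)) :
    ∃ f : V → Fin 3,
      Compatible (contract G F) (SimpleGraph.fromEdgeSet F ⊓ G).connectedComponentMk f := by
  obtain ⟨c, hc⟩ := noTheta_colorable (contract G F) hT.2
  refine ⟨fun v => c ((SimpleGraph.fromEdgeSet F ⊓ G).connectedComponentMk v), ?_, ?_, ?_⟩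
  · intro x y h
    simp only []
    rw [h]
  · intro t t' _ _ hadj x y hx hy
    simp only []
    rw [hx, hy]
    exact hc _ _ hadj
  · intro l hl hlen _ _ _
    obtain ⟨hne, hnodup, hchain, _⟩ := hl
    have hget := List.isChain_iff_getElem.mp hchain
    constructor
    · intro x y hx hy
      simp only []
      rw [hx, hy]
      exact hc _ _ (hget 0 (by omega))
    · intro x y hx hy
      simp only []
      rw [hx, hy]
      have hadj : (contract G F).Adj (l.get ⟨l.length - 2, by omega⟩) (l.get ⟨l.length - 2 + 1, by omega⟩) := hget (l.length - 2) (by omega)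
      have hEq : l.get ⟨l.length - 2 + 1, by omega⟩ = l.get ⟨l.length - 1, by omega⟩ :=
        congrArg l.get (Fin.ext (show l.length - 2 + 1 = l.length - 1 by omega))
      rw [hEq] at hadj
      exact hc _ _ hadj.symm
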